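/- (Emch's non-Markovian decay law, eq. (3.3.17), for the exponential Ising chain with ξ = 2) For N ≥ 1 let Λ_N = {−N, …, N} ⊆ ℤ, let J_N : Λ_N → Λ_N → ℝ be given by J_N x y = 2^{−|x−y|} for x ≠ y and J_N x x = 0, let H_N = (1/2)·∑_{x,y∈Λ_N} J_N x y · σₓ³ σ_y³, and let ρ_N be the product state on Λ_N with entries ρ_N(f,g) = ∏_{x∈Λ_N} Q(f x, g x), where Q = [[1/2,1/2],[1/2,1/2]]. Then for every real t ≠ 0: lim_{N→∞} Tr(ρ_N · exp(itH_N) σ₀¹ exp(−itH_N)) = (sin(2t)/(2t))². -/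

import Mathlib

open Matrix Complex Filter

noncomputable section

/-- The three Pauli matrices `σ¹, σ², σ³` (indexed by `Fin 3` as `0, 1, 2`). -/
def pauli : Fin 3 → Matrix (Fin 2) (Fin 2) ℂ :=
  ![!![0, 1; 1, 0], !![0, -I; I, 0], !![1, 0; 0, -1]]

/-- The Pauli operator `σₓᵏ` acting at the site `x` of the finite lattice `Λ`, as a matrix
indexed by spin configurations `Λ → Fin 2`. -/
def pauliAt {Λ : Type*} [Fintype Λ] [DecidableEq Λ] (x : Λ) (k : Fin 3) :
    Matrix (Λ → Fin 2) (Λ → Fin 2) ℂ :=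
  fun f g => if ∀ y, y ≠ x → f y = g y then pauli k (f x) (g x) else 0

/-- The generalized Ising model Hamiltonian `H = (1/2) ∑_{x,y ∈ Λ} J x y · σₓ³ σ_y³`. -/
def gImHamiltonian {Λ : Type*} [Fintype Λ] [DecidableEq Λ] (J : Λ → Λ → ℝ) :
    Matrix (Λ → Fin 2) (Λ → Fin 2) ℂ :=
  (2 : ℂ)⁻¹ • ∑ x : Λ, ∑ y : Λ, (J x y : ℂ) • (pauliAt x 2 * pauliAt y 2)

/-- The lattice `Λ_N = {-N, …, N} ⊆ ℤ`. -/
abbrev siteN (N : ℕ) : Type := {x : ℤ // x ∈ Finset.Icc (-(N : ℤ)) (N : ℤ)}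

/-- The exponential (`ξ = 2`) Ising couplings `J_N x y = 2^{-|x-y|}` (`x ≠ y`), `J_N x x = 0`. -/
def Jexp (N : ℕ) : siteN N → siteN N → ℝ :=
  fun x y => if x.1 = y.1 then 0 else (2 : ℝ) ^ (-|x.1 - y.1|)

/-- The rank-one projection `Q = [[1/2,1/2],[1/2,1/2]]` onto the `+1` eigenvector of `σ¹`. -/
def Qplus : Matrix (Fin 2) (Fin 2) ℂ := !![1/2, 1/2; 1/2, 1/2]

/-- The product state `ρ_N = ⊗_{x ∈ Λ_N} P_x^{+,1}` on the lattice `Λ_N`. -/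
def rhoN (N : ℕ) : Matrix (siteN N → Fin 2) (siteN N → Fin 2) ℂ :=
  Matrix.of fun f g => ∏ x : siteN N, Qplus (f x) (g x)

/-- The origin `0 ∈ Λ_N`. -/
def site0 (N : ℕ) : siteN N := ⟨0, by simp [Finset.mem_Icc]⟩

def sgn : Fin 2 → ℂ := fun a => if a = 0 then 1 else -1

lemma fin2_cases (a : Fin 2) : a = 0 ∨ a = 1 := by omega

variable {Λ : Type*} [Fintype Λ] [DecidableEq Λ]

lemma sgn_sq (a : Fin 2) : sgn a * sgn a = 1 := by
  rcases fin2_cases a with h | h <;> simp [sgn, h]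

lemma sgn_add_one (a : Fin 2) : sgn (a + 1) = - sgn a := by
  rcases fin2_cases a with h | h <;> simp [sgn, h] <;> rfl

lemma pauliAt2_eq (x : Λ) : pauliAt x 2 = Matrix.diagonal (fun f => sgn (f x)) := by
  ext f g
  simp only [pauliAt, Matrix.diagonal_apply]
  by_cases h : f = g
  · subst h
    rw [if_pos (fun y _ => rfl), if_pos rfl]
    rcases fin2_cases (f x) with h | h <;> rw [h] <;> simp [pauli, sgn]
  · rw [if_neg h]
    split_ifs with h2
    · have hx : f x ≠ g x := fun hfx => h (funext fun y => by
        by_cases hy : y = x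
        · rw [hy]; exact hfx
        · exact h2 y hy)
      rcases fin2_cases (f x) with h3 | h3 <;> rcases fin2_cases (g x) with h4 | h4 <;>
        simp_all [pauli]
    · rfl

def energy (J : Λ → Λ → ℝ) (f : Λ → Fin 2) : ℂ :=
  2⁻¹ * ∑ x : Λ, ∑ y : Λ, (J x y : ℂ) * (sgn (f x) * sgn (f y))

lemma gIm_eq_diagonal (J : Λ → Λ → ℝ) :
    gImHamiltonian J = Matrix.diagonal (energy J) := by
  unfold gImHamiltonian
  simp_rw [pauliAt2_eq, Matrix.diagonal_mul_diagonal]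
  ext f g
  by_cases h : f = g
  · subst h
    simp [Matrix.sum_apply, Matrix.diagonal_apply_eq, energy, Finset.mul_sum]
  · simp [Matrix.sum_apply, Matrix.diagonal_apply_ne _ h]

lemma Qplus_apply (a b : Fin 2) : Qplus a b = 2⁻¹ := by
  rcases fin2_cases a with h|h <;> rcases fin2_cases b with h'|h' <;>
    simp [Qplus, h, h'] <;> norm_num

lemma exp_smul_diagonal (c : ℂ) (v : (Λ → Fin 2) → ℂ) :
    NormedSpace.exp (c • Matrix.diagonal v)
      = Matrix.diagonal (fun f => Complex.exp (c * v f)) := by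
  rw [← Matrix.diagonal_smul, Matrix.exp_diagonal]
  have h : NormedSpace.exp (c • v) = fun f => Complex.exp (c * v f) := by
    funext f
    rw [Pi.coe_exp, ← Complex.exp_eq_exp_ℂ]
    simp [smul_eq_mul]
  rw [h]

lemma pauliAt0_eq (x₀ : Λ) (g f : Λ → Fin 2) :
    pauliAt x₀ 0 g f = if f = Function.update g x₀ (g x₀ + 1) then 1 else 0 := by
  simp only [pauliAt]
  by_cases h : f = Function.update g x₀ (g x₀ + 1)
  · subst h
    rw [if_pos, if_pos rfl]
    · rw [Function.update_self]
      rcases fin2_cases (g x₀) with h | h <;> rw [h] <;> simp [pauli] <;> rfl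
    · intro y hy
      rw [Function.update_of_ne hy]
  · rw [if_neg h]
    split_ifs with h2
    · have hx : f x₀ = g x₀ := by
        by_contra hne
        apply h
        funext y
        by_cases hy : y = x₀
        · subst hy; rw [Function.update_self]; omega
        · rw [Function.update_of_ne hy]; exact (h2 y hy).symm
      rw [hx]
      rcases fin2_cases (g x₀) with h3 | h3 <;> rw [h3] <;> simp [pauli]
    · rfl

lemma energy_sub (J : Λ → Λ → ℝ) (x₀ : Λ) (g : Λ → Fin 2) :
    energy J g - energy J (Function.update g x₀ (g x₀ + 1)) =
      sgn (g x₀) * ∑ y ∈ Finset.univ.erase x₀,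
        (((J x₀ y + J y x₀ : ℝ) : ℂ) * sgn (g y)) := by
  classical
  set g' := Function.update g x₀ (g x₀ + 1) with hg'
  have hne : ∀ y : Λ, y ≠ x₀ → sgn (g' y) = sgn (g y) := fun y hy => by
    rw [hg', Function.update_of_ne hy]
  have hx0 : sgn (g' x₀) = - sgn (g x₀) := by
    rw [hg', Function.update_self, sgn_add_one]
  unfold energy
  rw [← mul_sub, ← Finset.sum_sub_distrib]
  have key : ∀ x : Λ,
      ((∑ y : Λ, (J x y : ℂ) * (sgn (g x) * sgn (g y))) -
        ∑ y : Λ, (J x y : ℂ) * (sgn (g' x) * sgn (g' y)))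
      = ∑ y : Λ, (J x y : ℂ) * (sgn (g x) * sgn (g y) - sgn (g' x) * sgn (g' y)) := by
    intro x
    rw [← Finset.sum_sub_distrib]
    exact Finset.sum_congr rfl fun y _ => by ring
  simp_rw [key]
  rw [← Finset.sum_erase_add _ _ (Finset.mem_univ x₀)]
  have h1 : ∀ x ∈ Finset.univ.erase x₀,
      (∑ y : Λ, (J x y : ℂ) * (sgn (g x) * sgn (g y) - sgn (g' x) * sgn (g' y)))
        = (J x x₀ : ℂ) * (2 * (sgn (g x) * sgn (g x₀))) := by
    intro x hx
    have hxne : x ≠ x₀ := Finset.ne_of_mem_erase hx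
    rw [← Finset.sum_erase_add _ _ (Finset.mem_univ x₀), Finset.sum_eq_zero, zero_add]
    · rw [hne x hxne, hx0]; ring
    · intro y hy
      rw [hne x hxne, hne y (Finset.ne_of_mem_erase hy)]
      ring
  rw [Finset.sum_congr rfl h1]
  rw [← Finset.sum_erase_add _ _ (Finset.mem_univ x₀)]
  have h2 : ∀ y ∈ Finset.univ.erase x₀,
      (J x₀ y : ℂ) * (sgn (g x₀) * sgn (g y) - sgn (g' x₀) * sgn (g' y))
        = (J x₀ y : ℂ) * (2 * (sgn (g x₀) * sgn (g y))) := by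
    intro y hy
    rw [hne y (Finset.ne_of_mem_erase hy), hx0]; ring
  rw [Finset.sum_congr rfl h2]
  have h3 : (J x₀ x₀ : ℂ) * (sgn (g x₀) * sgn (g x₀) - sgn (g' x₀) * sgn (g' x₀)) = 0 := by
    rw [hx0]; ring
  rw [h3, add_zero, Finset.mul_sum, mul_add, Finset.mul_sum, Finset.mul_sum,
    ← Finset.sum_add_distrib]
  refine Finset.sum_congr rfl fun y hy => ?_
  push_cast
  ring

lemma sum_fin2_exp (θ : ℝ) (s : Fin 2) :
    ∑ a : Fin 2, Complex.exp (I * θ * sgn s * sgn a) = 2 * ((Real.cos θ : ℝ) : ℂ) := by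
  rw [Fin.sum_univ_two, Complex.ofReal_cos, Complex.cos]
  rcases fin2_cases s with h | h <;> rw [h] <;> simp [sgn] <;> ring_nf

lemma erase_to_subtype_prod (x₀ : Λ) (f : Λ → ℂ) :
    ∏ y ∈ Finset.univ.erase x₀, f y = ∏ j : {y : Λ // y ≠ x₀}, f j.1 :=
  Finset.prod_subtype _ (fun x => by simp [Finset.mem_erase]) _

lemma erase_to_subtype_sum (x₀ : Λ) (f : Λ → ℂ) :
    ∑ y ∈ Finset.univ.erase x₀, f y = ∑ j : {y : Λ // y ≠ x₀}, f j.1 :=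
  Finset.sum_subtype _ (fun x => by simp [Finset.mem_erase]) _

lemma sum_phase (K : Λ → ℝ) (x₀ : Λ) (t : ℝ) :
    (∑ g : Λ → Fin 2, Complex.exp (I * t *
        (sgn (g x₀) * ∑ y ∈ Finset.univ.erase x₀, ((K y : ℂ) * sgn (g y)))))
      = 2 * ∏ y ∈ Finset.univ.erase x₀, (2 * ((Real.cos (t * K y) : ℝ) : ℂ)) := by
  classical
  have step1 : ∀ g : Λ → Fin 2, Complex.exp (I * t *
        (sgn (g x₀) * ∑ y ∈ Finset.univ.erase x₀, ((K y : ℂ) * sgn (g y))))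
      = ∏ j : {y : Λ // y ≠ x₀}, Complex.exp (I * (t * K j.1) * sgn (g x₀) * sgn (g j.1)) := by
    intro g
    rw [erase_to_subtype_sum, ← Complex.exp_sum]
    congr 1
    rw [Finset.mul_sum, Finset.mul_sum]
    exact Finset.sum_congr rfl fun j _ => by push_cast; ring
  simp_rw [step1]
  rw [← Equiv.sum_comp (Equiv.funSplitAt x₀ (Fin 2)).symm]
  rw [Fintype.sum_prod_type]
  have step2 : ∀ s : Fin 2, ∀ h : {y : Λ // y ≠ x₀} → Fin 2,
      (∏ j : {y : Λ // y ≠ x₀}, Complex.exp (I * (t * K j.1) *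
        sgn (((Equiv.funSplitAt x₀ (Fin 2)).symm (s, h)) x₀) *
        sgn (((Equiv.funSplitAt x₀ (Fin 2)).symm (s, h)) j.1)))
      = ∏ j : {y : Λ // y ≠ x₀}, Complex.exp (I * (t * K j.1) * sgn s * sgn (h j)) := by
    intro s h
    refine Finset.prod_congr rfl fun j _ => ?_
    congr 2
    · congr 1
      simp [Equiv.funSplitAt, Equiv.piSplitAt]
    · congr 1
      simp [Equiv.funSplitAt, Equiv.piSplitAt, j.2]
  simp_rw [step2]
  have step3 : ∀ s : Fin 2,
      (∑ h : {y : Λ // y ≠ x₀} → Fin 2,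
        ∏ j : {y : Λ // y ≠ x₀}, Complex.exp (I * (t * K j.1) * sgn s * sgn (h j)))
      = ∏ j : {y : Λ // y ≠ x₀}, (2 * ((Real.cos (t * K j.1) : ℝ) : ℂ)) := by
    intro s
    rw [← Fintype.prod_sum (fun (j : {y : Λ // y ≠ x₀}) (a : Fin 2) =>
      Complex.exp (I * (t * K j.1) * sgn s * sgn a))]
    refine Finset.prod_congr rfl fun j _ => ?_
    rw [show ((t : ℂ) * (K j.1 : ℂ)) = ((t * K j.1 : ℝ) : ℂ) by push_cast; ring]
    exact sum_fin2_exp (t * K j.1) s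
  simp_rw [step3]
  rw [Finset.sum_const, Finset.card_univ, Fintype.card_fin,
    erase_to_subtype_prod x₀ (fun y => 2 * ((Real.cos (t * K y) : ℝ) : ℂ))]
  simp [two_smul, two_mul]

lemma trace_formula (J : Λ → Λ → ℝ) (x₀ : Λ) (t : ℝ) :
    (Matrix.of (fun f g : Λ → Fin 2 => ∏ x : Λ, Qplus (f x) (g x)) *
      (NormedSpace.exp ((I * t) • gImHamiltonian J) * pauliAt x₀ 0 *
        NormedSpace.exp ((-(I * t)) • gImHamiltonian J))).trace
      = ∏ y ∈ Finset.univ.erase x₀, ((Real.cos (t * (J x₀ y + J y x₀)) : ℝ) : ℂ) := by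
  classical
  rw [gIm_eq_diagonal, exp_smul_diagonal, exp_smul_diagonal]
  set n := Fintype.card Λ with hn
  set d₁ : (Λ → Fin 2) → ℂ := fun f => Complex.exp ((I * t) * energy J f) with hd₁
  set d₂ : (Λ → Fin 2) → ℂ := fun f => Complex.exp ((-(I * t)) * energy J f) with hd₂
  set ρ : Matrix (Λ → Fin 2) (Λ → Fin 2) ℂ :=
    Matrix.of (fun f g : Λ → Fin 2 => ∏ x : Λ, Qplus (f x) (g x)) with hρ
  have hrho : ∀ f g : Λ → Fin 2, ρ f g = (2⁻¹ : ℂ) ^ n := by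
    intro f g
    simp [hρ, Qplus_apply, Finset.prod_const, hn, Finset.card_univ]
  have hM : ∀ g f : Λ → Fin 2,
      (Matrix.diagonal d₁ * pauliAt x₀ 0 * Matrix.diagonal d₂) g f
        = if f = Function.update g x₀ (g x₀ + 1) then d₁ g * d₂ f else 0 := by
    intro g f
    rw [Matrix.mul_diagonal, Matrix.diagonal_mul, pauliAt0_eq]
    split_ifs <;> ring
  have htr : (ρ * (Matrix.diagonal d₁ * pauliAt x₀ 0 * Matrix.diagonal d₂)).trace
      = ∑ f : Λ → Fin 2, ∑ g : Λ → Fin 2,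
          ρ f g * (Matrix.diagonal d₁ * pauliAt x₀ 0 * Matrix.diagonal d₂) g f := by
    simp [Matrix.trace, Matrix.diag_apply, Matrix.mul_apply]
  rw [htr, Finset.sum_comm]
  have hinner : ∀ g : Λ → Fin 2,
      (∑ f : Λ → Fin 2, ρ f g *
          (Matrix.diagonal d₁ * pauliAt x₀ 0 * Matrix.diagonal d₂) g f)
      = (2⁻¹ : ℂ) ^ n * Complex.exp (I * t *
          (sgn (g x₀) * ∑ y ∈ Finset.univ.erase x₀,
            (((J x₀ y + J y x₀ : ℝ) : ℂ) * sgn (g y)))) := by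
    intro g
    have : ∀ f : Λ → Fin 2, ρ f g *
        (Matrix.diagonal d₁ * pauliAt x₀ 0 * Matrix.diagonal d₂) g f
        = if f = Function.update g x₀ (g x₀ + 1) then (2⁻¹ : ℂ) ^ n * (d₁ g * d₂ f) else 0 := by
      intro f
      rw [hM, hrho]
      split_ifs <;> ring
    rw [Finset.sum_congr rfl fun f _ => this f, Finset.sum_ite_eq' _ _
      (fun f => (2⁻¹ : ℂ) ^ n * (d₁ g * d₂ f)), if_pos (Finset.mem_univ _)]
    rw [hd₁, hd₂]
    simp only
    rw [← Complex.exp_add]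
    congr 2
    rw [show (I * ↑t) * energy J g + (-(I * ↑t)) * energy J (Function.update g x₀ (g x₀ + 1))
        = I * ↑t * (energy J g - energy J (Function.update g x₀ (g x₀ + 1))) by ring,
      energy_sub J x₀ g]
  rw [Finset.sum_congr rfl fun g _ => hinner g, ← Finset.mul_sum,
    sum_phase (fun y => J x₀ y + J y x₀) x₀ t]
  rw [Finset.prod_mul_distrib, Finset.prod_const]
  have hcard : (Finset.univ.erase x₀).card + 1 = n := by
    rw [Finset.card_erase_add_one (Finset.mem_univ x₀), Finset.card_univ]
  rw [← hcard]
  field_simp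
  rw [pow_succ]
  ring_nf
  rw [mul_assoc, ← mul_pow]
  norm_num

-- Viète-type identity
lemma sin_prod_id (t : ℝ) (N : ℕ) :
    2^N * Real.sin (2*t/2^N) * ∏ j ∈ Finset.range N, Real.cos (2*t / 2^(j+1))
      = Real.sin (2*t) := by
  induction N with
  | zero => simp
  | succ m ih =>
    rw [Finset.prod_range_succ]
    have hx : 2 * (2*t/2^(m+1)) = 2*t/2^m := by
      rw [pow_succ]; field_simp
    have hs : Real.sin (2*t/2^m) = 2 * Real.sin (2*t/2^(m+1)) * Real.cos (2*t/2^(m+1)) := by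
      rw [← hx, Real.sin_two_mul]
    rw [← ih, hs, pow_succ]
    ring

lemma tendsto_scaled_sin (t : ℝ) (ht : t ≠ 0) :
    Tendsto (fun N : ℕ => (2:ℝ)^N * Real.sin (2*t/2^N)) atTop (nhds (2*t)) := by
  set u : ℕ → ℝ := fun N => 2*t/2^N with hu
  have hu0 : ∀ N, u N ≠ 0 := fun N => by
    simp only [hu]
    have : (2:ℝ)^N ≠ 0 := by positivity
    intro hc
    rcases div_eq_zero_iff.mp hc with h | h
    · exact ht (by linarith)
    · exact this h
  have hulim : Tendsto u atTop (nhds 0) := by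
    have h1 : Tendsto (fun N : ℕ => ((1:ℝ)/2)^N) atTop (nhds 0) := by
      apply tendsto_pow_atTop_nhds_zero_of_lt_one <;> norm_num
    have h2 : Tendsto (fun N : ℕ => 2*t*((1:ℝ)/2)^N) atTop (nhds (2*t*0)) :=
      tendsto_const_nhds.mul h1
    rw [mul_zero] at h2
    refine h2.congr fun N => ?_
    rw [hu]
    simp [div_pow]
    ring
  have hslope : Tendsto (fun x : ℝ => Real.sin x / x) (nhdsWithin 0 {0}ᶜ) (nhds 1) := by
    have h := hasDerivAt_iff_tendsto_slope.mp (Real.hasDerivAt_sin 0)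
    rw [Real.cos_zero] at h
    refine h.congr fun x => ?_
    simp [slope_def_field]
  have hcomp : Tendsto (fun N => Real.sin (u N) / u N) atTop (nhds 1) :=
    hslope.comp (tendsto_nhdsWithin_of_tendsto_nhds_of_eventually_within _ hulim
      (Eventually.of_forall fun N => hu0 N))
  have h3 : Tendsto (fun N => 2*t*(Real.sin (u N) / u N)) atTop (nhds (2*t*1)) :=
    tendsto_const_nhds.mul hcomp
  rw [mul_one] at h3
  refine h3.congr fun N => ?_
  have h2N : (2:ℝ)^N ≠ 0 := by positivity
  rw [hu]
  field_simp

lemma tendsto_cos_prod (t : ℝ) (ht : t ≠ 0) :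
    Tendsto (fun N : ℕ => ∏ j ∈ Finset.range N, Real.cos (2*t / 2^(j+1))) atTop
      (nhds (Real.sin (2*t) / (2*t))) := by
  have ha := tendsto_scaled_sin t ht
  have hne : (2*t : ℝ) ≠ 0 := by simpa using ht
  have hev : ∀ᶠ N : ℕ in atTop, (2:ℝ)^N * Real.sin (2*t/2^N) ≠ 0 := ha.eventually_ne hne
  have hdiv : Tendsto (fun N : ℕ => Real.sin (2*t) / ((2:ℝ)^N * Real.sin (2*t/2^N)))
      atTop (nhds (Real.sin (2*t) / (2*t))) := tendsto_const_nhds.div ha hne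
  refine hdiv.congr' ?_
  filter_upwards [hev] with N hN
  rw [eq_comm, eq_div_iff hN, mul_comm]
  exact sin_prod_id t N

lemma prod_Icc_erase_sq (N : ℕ) (F : ℤ → ℝ) (hF : ∀ x, F (-x) = F x) :
    ∏ x ∈ (Finset.Icc (-(N:ℤ)) N).erase 0, F x = (∏ x ∈ Finset.Icc (1:ℤ) N, F x) ^ 2 := by
  have hset : (Finset.Icc (-(N:ℤ)) N).erase 0
      = (Finset.Icc (1:ℤ) N).image (fun x => -x) ∪ Finset.Icc (1:ℤ) N := by
    ext x
    simp only [Finset.mem_erase, Finset.mem_Icc, Finset.mem_union, Finset.mem_image]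
    constructor
    · rintro ⟨hx0, h1, h2⟩
      by_cases hx : 0 < x
      · right; omega
      · left; exact ⟨-x, by omega, by ring⟩
    · rintro (⟨a, ha, rfl⟩ | h) <;> omega
  have hdisj : Disjoint ((Finset.Icc (1:ℤ) N).image (fun x => -x)) (Finset.Icc (1:ℤ) N) := by
    rw [Finset.disjoint_left]
    rintro x hx hx'
    simp only [Finset.mem_image, Finset.mem_Icc] at hx hx'
    obtain ⟨a, ha, rfl⟩ := hx
    omega
  rw [hset, Finset.prod_union hdisj, Finset.prod_image (by intro x _ y _ h; exact neg_injective h)]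
  rw [Finset.prod_congr rfl fun x _ => hF x, sq]

lemma prod_Icc_int_range (M : ℕ) (F : ℤ → ℝ) :
    ∏ x ∈ Finset.Icc (1:ℤ) (M:ℤ), F x = ∏ j ∈ Finset.range M, F ((j:ℤ) + 1) := by
  induction M with
  | zero => simp
  | succ m ih =>
    have hins : Finset.Icc (1:ℤ) ((m:ℕ)+1 : ℕ) = insert ((m:ℤ)+1) (Finset.Icc (1:ℤ) (m:ℤ)) := by
      ext x
      simp only [Finset.mem_Icc, Finset.mem_insert]
      push_cast
      omega
    rw [Finset.prod_range_succ, ← ih, hins,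
      Finset.prod_insert (by simp [Finset.mem_Icc])]
    ring

lemma prod_site_erase (N : ℕ) (F : ℤ → ℝ) :
    ∏ y ∈ (Finset.univ : Finset (siteN N)).erase (site0 N), F y.1
      = ∏ x ∈ (Finset.Icc (-(N:ℤ)) (N:ℤ)).erase 0, F x := by
  refine Finset.prod_bij (fun y _ => y.1) ?_ ?_ ?_ ?_
  · intro a ha
    rw [Finset.mem_erase] at ha ⊢
    exact ⟨fun h => ha.1 (Subtype.ext h), a.2⟩
  · intro a _ b _ h
    exact Subtype.ext h
  · intro b hb
    rw [Finset.mem_erase] at hb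
    exact ⟨⟨b, hb.2⟩, Finset.mem_erase.mpr ⟨fun h => hb.1 (congrArg Subtype.val h),
      Finset.mem_univ _⟩, rfl⟩
  · intro a _
    rfl

/-- **Emch's non-Markovian decay law (eq. (3.3.17)) for the exponential Ising chain with
`ξ = 2`.**  For every `t ≠ 0`, `Tr(ρ_N e^{itH_N} σ₀¹ e^{-itH_N}) → (sin(2t)/(2t))²` as
`N → ∞`. -/
theorem emch_free_induction_decay (t : ℝ) (ht : t ≠ 0) :
    Tendsto
      (fun N : ℕ =>
        (rhoN N *
          (NormedSpace.exp ((I * t) • gImHamiltonian (Jexp N)) * pauliAt (site0 N) 0 *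
            NormedSpace.exp ((-(I * t)) • gImHamiltonian (Jexp N)))).trace)
      atTop (nhds (((Real.sin (2 * t) / (2 * t) : ℝ) : ℂ) ^ 2)) := by
  classical
  set F : ℤ → ℝ := fun x => Real.cos (2 * t * (2:ℝ) ^ (-|x|)) with hF
  have hFeven : ∀ x, F (-x) = F x := fun x => by rw [hF]; simp
  set P : ℕ → ℝ := fun N => ∏ j ∈ Finset.range N, Real.cos (2*t / 2^(j+1)) with hP
  have hFP : ∀ N : ℕ, ∏ x ∈ Finset.Icc (1:ℤ) (N:ℤ), F x = P N := by
    intro N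
    rw [prod_Icc_int_range N F, hP]
    refine Finset.prod_congr rfl fun j _ => ?_
    simp only [hF]
    have h1 : |((j:ℤ) + 1)| = (j:ℤ) + 1 := abs_of_pos (by omega)
    rw [h1]
    have h2 : (2:ℝ) ^ (-((j:ℤ) + 1)) = ((2:ℝ) ^ (j+1))⁻¹ := by
      rw [show ((j:ℤ) + 1) = ((j+1 : ℕ) : ℤ) by push_cast; ring, _root_.zpow_neg, zpow_natCast]
    rw [h2, ← div_eq_mul_inv]
  have htrace : ∀ N : ℕ,
      (rhoN N *
          (NormedSpace.exp ((I * t) • gImHamiltonian (Jexp N)) * pauliAt (site0 N) 0 *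
            NormedSpace.exp ((-(I * t)) • gImHamiltonian (Jexp N)))).trace
        = (((P N) ^ 2 : ℝ) : ℂ) := by
    intro N
    rw [show rhoN N = Matrix.of (fun f g : siteN N → Fin 2 =>
        ∏ x : siteN N, Qplus (f x) (g x)) from rfl]
    rw [trace_formula (Jexp N) (site0 N) t]
    have hJ : ∀ y ∈ (Finset.univ : Finset (siteN N)).erase (site0 N),
        ((Real.cos (t * (Jexp N (site0 N) y + Jexp N y (site0 N))) : ℝ) : ℂ)
          = ((F y.1 : ℝ) : ℂ) := by
      intro y hy
      have hy0 : y.1 ≠ 0 := by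
        intro h
        exact (Finset.mem_erase.mp hy).1 (Subtype.ext (by rw [h]; rfl))
      congr 1
      simp only [hF]
      have hs0 : (site0 N).1 = 0 := rfl
      rw [Jexp, Jexp, hs0]
      rw [if_neg (fun h => hy0 h.symm), if_neg hy0]
      rw [show (0:ℤ) - y.1 = -(y.1 - 0) by ring, abs_neg, sub_zero]
      congr 1
      ring
    rw [Finset.prod_congr rfl hJ]
    rw [show (∏ y ∈ (Finset.univ : Finset (siteN N)).erase (site0 N), ((F y.1 : ℝ) : ℂ))
        = (((∏ y ∈ (Finset.univ : Finset (siteN N)).erase (site0 N), F y.1 : ℝ)) : ℂ) by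
      rw [Complex.ofReal_prod]]
    congr 1
    rw [prod_site_erase N F, prod_Icc_erase_sq N F hFeven, hFP N]
  have hreal : Tendsto (fun N : ℕ => (P N)^2) atTop
      (nhds ((Real.sin (2*t) / (2*t))^2)) := (tendsto_cos_prod t ht).pow 2
  have hcplx : Tendsto (fun N : ℕ => (((P N)^2 : ℝ) : ℂ)) atTop
      (nhds (((Real.sin (2*t) / (2*t) : ℝ) : ℂ)^2)) := by
    have := (Complex.continuous_ofReal.tendsto _).comp hreal
    rw [show ((((Real.sin (2*t) / (2*t))^2 : ℝ)) : ℂ)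
        = (((Real.sin (2*t) / (2*t) : ℝ) : ℂ))^2 by push_cast; ring] at this
    exact this
  exact hcplx.congr fun N => (htrace N).symm

end
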